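/- arXiv:1401.7725 — 5 statements merged into one kernel-verified Lean document; each statement's English description precedes it below -/
import Mathlib

section
/- Let g be a Lie triple system over a field F with char F ≠ 2, 3 and (V,θ) a representation of g with D(x,y) := θ(y,x) − θ(x,y). On Hom(g,V) define [(x1,x2),φ]_L(w) := D(x1,x2)φ(w) − φ([x1,x2,w]) and [φ,(x1,x2)]_R(w) := φ([x1,x2,w]) − D(x1,x2)φ(w) + θ(x1,w)φ(x2) − θ(x2,w)φ(x1). Then for all x1,x2,y1,y2 ∈ g and all linear φ : g → V the following three identities hold (so Hom(g,V) is a representation of the Leibniz algebra of fundamental objects): (LLM) [([x1,x2,y1],y2),φ]_L + [(y1,[x1,x2,y2]),φ]_L = [(x1,x2),[(y1,y2),φ]_L]_L − [(y1,y2),[(x1,x2),φ]_L]_L; (MLL) [φ,([x1,x2,y1],y2)]_R + [φ,(y1,[x1,x2,y2])]_R = [[φ,(x1,x2)]_R,(y1,y2)]_R + [(x1,x2),[φ,(y1,y2)]_R]_L; (LML) [(x1,x2),[φ,(y1,y2)]_R]_L = [[(x1,x2),φ]_L,(y1,y2)]_R + [φ,([x1,x2,y1],y2)]_R + [φ,(y1,[x1,x2,y2])]_R.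 -/
/-- `Dop θ x y = θ(y,x) − θ(x,y)` for a bilinear `θ : g × g → End(V)`. -/
def Dop {F : Type*} [Field F] {g V : Type*} [AddCommGroup g] [Module F g]
    [AddCommGroup V] [Module F V]
    (θ : g →ₗ[F] g →ₗ[F] Module.End F V) (x y : g) : Module.End F V :=
  θ y x - θ x y

/-- Left action `[(x1,x2),φ]_L(w) = D(x1,x2)φ(w) − φ([x1,x2,w])` on maps `g → V`. -/
def actL {F : Type*} [Field F] {g V : Type*} [AddCommGroup g] [Module F g]
    [AddCommGroup V] [Module F V]
    (t : g →ₗ[F] g →ₗ[F] g →ₗ[F] g)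
    (θ : g →ₗ[F] g →ₗ[F] Module.End F V) (x1 x2 : g) (φ : g → V) : g → V :=
  fun w => Dop θ x1 x2 (φ w) - φ (t x1 x2 w)

/-- Right action
`[φ,(x1,x2)]_R(w) = φ([x1,x2,w]) − D(x1,x2)φ(w) + θ(x1,w)φ(x2) − θ(x2,w)φ(x1)`. -/
def actR {F : Type*} [Field F] {g V : Type*} [AddCommGroup g] [Module F g]
    [AddCommGroup V] [Module F V]
    (t : g →ₗ[F] g →ₗ[F] g →ₗ[F] g)
    (θ : g →ₗ[F] g →ₗ[F] Module.End F V) (x1 x2 : g) (φ : g → V) : g → V :=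
  fun w => φ (t x1 x2 w) - Dop θ x1 x2 (φ w) + θ x1 w (φ x2) - θ x2 w (φ x1)

/- STATEMENT 2: for a representation (V,θ) of a Lie triple system g, the maps
`actL` and `actR` make Hom(g,V) into a representation of the Leibniz algebra of
fundamental objects: the identities (LLM), (MLL) and (LML) hold. -/
set_option maxHeartbeats 1000000 in
theorem hom_is_leibniz_rep {F : Type*} [Field F]
    (hchar2 : (2 : F) ≠ 0) (hchar3 : (3 : F) ≠ 0)
    {g : Type*} [AddCommGroup g] [Module F g]
    (t : g →ₗ[F] g →ₗ[F] g →ₗ[F] g)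
    (hskew : ∀ x y : g, t x x y = 0)
    (hjac : ∀ x y z : g, t x y z + t y z x + t z x y = 0)
    (hfund : ∀ x y a b c : g,
      t x y (t a b c) = t (t x y a) b c + t a (t x y b) c + t a b (t x y c))
    {V : Type*} [AddCommGroup V] [Module F V]
    (θ : g →ₗ[F] g →ₗ[F] Module.End F V)
    (hR1 : ∀ x1 x2 y1 y2 : g,
      Dop θ x1 x2 * θ y1 y2 - θ y1 y2 * Dop θ x1 x2 =
        θ (t x1 x2 y1) y2 + θ y1 (t x1 x2 y2))
    (hR2 : ∀ x1 y1 y2 y3 : g,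
      θ x1 (t y1 y2 y3) =
        θ y2 y3 * θ x1 y1 - θ y1 y3 * θ x1 y2 + Dop θ y1 y2 * θ x1 y3) :
    ∀ (x1 x2 y1 y2 : g) (φ : g →ₗ[F] V),
      -- (LLM)
      (actL t θ (t x1 x2 y1) y2 ⇑φ + actL t θ y1 (t x1 x2 y2) ⇑φ =
        actL t θ x1 x2 (actL t θ y1 y2 ⇑φ) - actL t θ y1 y2 (actL t θ x1 x2 ⇑φ)) ∧
      -- (MLL)
      (actR t θ (t x1 x2 y1) y2 ⇑φ + actR t θ y1 (t x1 x2 y2) ⇑φ =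
        actR t θ y1 y2 (actR t θ x1 x2 ⇑φ) + actL t θ x1 x2 (actR t θ y1 y2 ⇑φ)) ∧
      -- (LML)
      (actL t θ x1 x2 (actR t θ y1 y2 ⇑φ) =
        actR t θ y1 y2 (actL t θ x1 x2 ⇑φ) + actR t θ (t x1 x2 y1) y2 ⇑φ +
          actR t θ y1 (t x1 x2 y2) ⇑φ) := by
  have hR1' : ∀ a b c d : g, ∀ v : V,
      θ b a (θ c d v) - θ a b (θ c d v) - (θ c d (θ b a v) - θ c d (θ a b v)) =
        θ (t a b c) d v + θ c (t a b d) v := by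
    intro a b c d v
    have h := LinearMap.congr_fun (hR1 a b c d) v
    simpa [Dop, LinearMap.sub_apply, LinearMap.add_apply, Module.End.mul_apply,
      map_sub] using h
  have hR2' : ∀ a c d e : g, ∀ v : V,
      θ a (t c d e) v =
        θ d e (θ a c v) - θ c e (θ a d v) +
          (θ d c (θ a e v) - θ c d (θ a e v)) := by
    intro a c d e v
    have h := LinearMap.congr_fun (hR2 a c d e) v
    simpa [Dop, LinearMap.sub_apply, LinearMap.add_apply, Module.End.mul_apply,
      map_sub] using h
  intro x1 x2 y1 y2 φ
  refine ⟨?_, ?_, ?_⟩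
  · funext w
    have hf := congrArg φ (hfund x1 x2 y1 y2 w)
    simp only [map_add] at hf
    simp only [actL, Dop, LinearMap.sub_apply, map_sub, Pi.add_apply, Pi.sub_apply]
    linear_combination (norm := module) hR1' x1 x2 y1 y2 (φ w)
      - hR1' x1 x2 y2 y1 (φ w) + hf
  · funext w
    have hf := congrArg φ (hfund x1 x2 y1 y2 w)
    simp only [map_add] at hf
    simp only [actR, actL, Dop, LinearMap.sub_apply, map_sub, map_add,
      Pi.add_apply, Pi.sub_apply]
    linear_combination (norm := module) hR1' x1 x2 y2 y1 (φ w)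
      - hR1' x1 x2 y1 y2 (φ w) - hR1' x1 x2 y1 w (φ y2)
      + hR1' x1 x2 y2 w (φ y1) - hR2' x1 y1 y2 w (φ x2)
      + hR2' x2 y1 y2 w (φ x1) - hf
  · funext w
    have hf := congrArg φ (hfund x1 x2 y1 y2 w)
    simp only [map_add] at hf
    simp only [actR, actL, Dop, LinearMap.sub_apply, map_sub, map_add,
      Pi.add_apply, Pi.sub_apply]
    linear_combination (norm := module) hR1' x1 x2 y1 y2 (φ w)
      - hR1' x1 x2 y2 y1 (φ w) + hR1' x1 x2 y1 w (φ y2)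
      - hR1' x1 x2 y2 w (φ y1) + hf
end

section
/- Let g be a Lie triple system over an infinite field F with char F ≠ 2, 3 and ω : g × g × g → g a trilinear map. Then the deformed bracket [x,y,z]_λ := [x,y,z] + λ·ω(x,y,z) makes g a Lie triple system for every λ ∈ F if and only if the following both hold: (i) ω itself defines a Lie triple system structure on g (ω(x,x,y) = 0, ω(x,y,z) + ω(y,z,x) + ω(z,x,y) = 0, and ω(x1,x2,ω(y1,y2,y3)) = ω(ω(x1,x2,y1),y2,y3) + ω(y1,ω(x1,x2,y2),y3) + ω(y1,y2,ω(x1,x2,y3))); and (ii) ω is a 3-cocycle of g with coefficients in the adjoint representation, i.e. ω(x1,x2,[y1,y2,y3]) + [x1,x2,ω(y1,y2,y3)] = ω([x1,x2,y1],y2,y3) + ω(y1,[x1,x2,y2],y3) + ω(y1,y2,[x1,x2,y3]) + [ω(x1,x2,y1),y2,y3] + [y1,ω(x1,x2,y2),y3] + [y1,y2,ω(x1,x2,y3)] for all xi, yi ∈ g. -/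
/- STATEMENT 4: over an infinite field F (char ≠ 2,3), a trilinear map ω generates
a λ-parameter infinitesimal deformation of the Lie triple system g (i.e. the bracket
[x,y,z] + λ·ω(x,y,z) is a Lie triple system bracket for every λ ∈ F) if and only if
ω itself defines a Lie triple system structure on g and ω is a 3-cocycle of g with
coefficients in the adjoint representation. -/
theorem deformation_iff_cocycle_and_LTS {F : Type*} [Field F] [Infinite F]
    (hchar2 : (2 : F) ≠ 0) (hchar3 : (3 : F) ≠ 0)
    {g : Type*} [AddCommGroup g] [Module F g]
    (t : g →ₗ[F] g →ₗ[F] g →ₗ[F] g)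
    (hskew : ∀ x y : g, t x x y = 0)
    (hjac : ∀ x y z : g, t x y z + t y z x + t z x y = 0)
    (hfund : ∀ x y a b c : g,
      t x y (t a b c) = t (t x y a) b c + t a (t x y b) c + t a b (t x y c))
    (ω : g →ₗ[F] g →ₗ[F] g →ₗ[F] g) :
    (∀ (lam : F) (b : g → g → g → g),
      (∀ x y z : g, b x y z = t x y z + lam • ω x y z) →
      ((∀ x y : g, b x x y = 0) ∧
       (∀ x y z : g, b x y z + b y z x + b z x y = 0) ∧
       (∀ x1 x2 y1 y2 y3 : g,
         b x1 x2 (b y1 y2 y3) =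
           b (b x1 x2 y1) y2 y3 + b y1 (b x1 x2 y2) y3 + b y1 y2 (b x1 x2 y3)))) ↔
    -- (i) ω defines a Lie triple system structure on g:
    ((∀ x y : g, ω x x y = 0) ∧
     (∀ x y z : g, ω x y z + ω y z x + ω z x y = 0) ∧
     (∀ x1 x2 y1 y2 y3 : g,
       ω x1 x2 (ω y1 y2 y3) =
         ω (ω x1 x2 y1) y2 y3 + ω y1 (ω x1 x2 y2) y3 + ω y1 y2 (ω x1 x2 y3)) ∧
     -- (ii) ω is a 3-cocycle with coefficients in the adjoint representation:
     (∀ x1 x2 y1 y2 y3 : g,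
       ω x1 x2 (t y1 y2 y3) + t x1 x2 (ω y1 y2 y3) =
         ω (t x1 x2 y1) y2 y3 + ω y1 (t x1 x2 y2) y3 + ω y1 y2 (t x1 x2 y3) +
           t (ω x1 x2 y1) y2 y3 + t y1 (ω x1 x2 y2) y3 + t y1 y2 (ω x1 x2 y3))) := by

  constructor
  · intro H
    have e1 := H 1 (fun x y z => t x y z + (1:F) • ω x y z) (fun _ _ _ => rfl)
    have e2 := H 2 (fun x y z => t x y z + (2:F) • ω x y z) (fun _ _ _ => rfl)
    obtain ⟨h1a, h1b, h1c⟩ := e1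
    obtain ⟨h2a, h2b, h2c⟩ := e2
    simp only [one_smul] at h1a h1b h1c
    refine ⟨?_, ?_, ?_, ?_⟩
    · intro x y
      have := h1a x y
      rw [hskew] at this
      simpa using this
    · intro x y z
      have h := h1b x y z
      have hj := hjac x y z
      linear_combination (norm := module) h - hj
    · intro x1 x2 y1 y2 y3
      refine smul_right_injective g hchar2 ?_
      have h1 := h1c x1 x2 y1 y2 y3
      have h2 := h2c x1 x2 y1 y2 y3
      have h0 := hfund x1 x2 y1 y2 y3
      simp only [map_add, map_smul, LinearMap.add_apply, LinearMap.smul_apply, smul_add, smul_smul] at h1 h2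
      linear_combination (norm := module) h2 - (2:F) • h1 + h0
    · intro x1 x2 y1 y2 y3
      refine smul_right_injective g hchar2 ?_
      have h1 := h1c x1 x2 y1 y2 y3
      have h2 := h2c x1 x2 y1 y2 y3
      have h0 := hfund x1 x2 y1 y2 y3
      simp only [map_add, map_smul, LinearMap.add_apply, LinearMap.smul_apply, smul_add, smul_smul] at h1 h2
      linear_combination (norm := module) (4:F) • h1 - h2 - (3:F) • h0
  · rintro ⟨hω1, hω2, hω3, hcoc⟩ lam b hb
    refine ⟨?_, ?_, ?_⟩
    · intro x y
      rw [hb, hskew, hω1]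
      simp
    · intro x y z
      rw [hb, hb, hb]
      linear_combination (norm := module) hjac x y z + lam • hω2 x y z
    · intro x1 x2 y1 y2 y3
      simp only [hb, map_add, map_smul, LinearMap.add_apply, LinearMap.smul_apply, smul_add, smul_smul]
      linear_combination (norm := module) hfund x1 x2 y1 y2 y3 +
        lam • hcoc x1 x2 y1 y2 y3 + (lam*lam) • hω3 x1 x2 y1 y2 y3
end

section
/- Let ĝ and g be Lie triple systems over a field F with char F ≠ 2, 3, let p : ĝ → g be a surjective linear map with p([a,b,c]_ĝ) = [p(a),p(b),p(c)]_g such that h := ker p is abelian ([a,b,c]_ĝ = 0 whenever at least two of a,b,c lie in h), and let σ : g → ĝ be a linear section of p. For x1, x2 ∈ g and u ∈ h define θ(x1,x2)(u) := [u, σ(x1), σ(x2)]_ĝ and D(x1,x2)(u) := [σ(x1), σ(x2), u]_ĝ. Then θ(x1,x2)(u) and D(x1,x2)(u) lie in h, D(x1,x2) = θ(x2,x1) − θ(x1,x2) as maps on h, and (h, θ) is a representation of g: (R1) D(x1,x2)∘θ(y1,y2) − θ(y1,y2)∘D(x1,x2) = θ([x1,x2,y1],y2) + θ(y1,[x1,x2,y2])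 and (R2) θ(x1,[y1,y2,y3]) = θ(y2,y3)∘θ(x1,y1) − θ(y1,y3)∘θ(x1,y2) + D(y1,y2)∘θ(x1,y3) hold as maps on h for all xi, yi ∈ g. -/
/- STATEMENT 15: for an abelian extension p : ĝ → g with kernel h and a linear
section σ, the maps θ(x1,x2)(u) = [u,σx1,σx2] and D(x1,x2)(u) = [σx1,σx2,u]
preserve h, satisfy D(x1,x2) = θ(x2,x1) − θ(x1,x2) on h, and (h,θ) is a
representation of g, i.e. (R1) and (R2) hold as maps on h. -/
theorem extension_gives_representation {F : Type*} [Field F]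
    (hchar2 : (2 : F) ≠ 0) (hchar3 : (3 : F) ≠ 0)
    {G : Type*} [AddCommGroup G] [Module F G]
    {g : Type*} [AddCommGroup g] [Module F g]
    (tG : G →ₗ[F] G →ₗ[F] G →ₗ[F] G)
    (hskewG : ∀ x y : G, tG x x y = 0)
    (hjacG : ∀ x y z : G, tG x y z + tG y z x + tG z x y = 0)
    (hfundG : ∀ x y a b c : G,
      tG x y (tG a b c) = tG (tG x y a) b c + tG a (tG x y b) c + tG a b (tG x y c))
    (tg : g →ₗ[F] g →ₗ[F] g →ₗ[F] g)
    (hskewg : ∀ x y : g, tg x x y = 0)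
    (hjacg : ∀ x y z : g, tg x y z + tg y z x + tg z x y = 0)
    (hfundg : ∀ x y a b c : g,
      tg x y (tg a b c) = tg (tg x y a) b c + tg a (tg x y b) c + tg a b (tg x y c))
    (p : G →ₗ[F] g) (hsurj : Function.Surjective p)
    (hp : ∀ a b c : G, p (tG a b c) = tg (p a) (p b) (p c))
    (habel : ∀ a b c : G,
      ((p a = 0 ∧ p b = 0) ∨ (p a = 0 ∧ p c = 0) ∨ (p b = 0 ∧ p c = 0)) →
        tG a b c = 0)
    (σ : g →ₗ[F] G) (hσ : ∀ x : g, p (σ x) = x) :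
    -- θ and D take values in h = ker p:
    (∀ (x1 x2 : g) (u : G), p u = 0 →
      p (tG u (σ x1) (σ x2)) = 0 ∧ p (tG (σ x1) (σ x2) u) = 0) ∧
    -- D(x1,x2) = θ(x2,x1) − θ(x1,x2) on h:
    (∀ (x1 x2 : g) (u : G), p u = 0 →
      tG (σ x1) (σ x2) u = tG u (σ x2) (σ x1) - tG u (σ x1) (σ x2)) ∧
    -- (R1) as maps on h:
    (∀ (x1 x2 y1 y2 : g) (u : G), p u = 0 →
      tG (σ x1) (σ x2) (tG u (σ y1) (σ y2)) -
        tG (tG (σ x1) (σ x2) u) (σ y1) (σ y2) =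
        tG u (σ (tg x1 x2 y1)) (σ y2) + tG u (σ y1) (σ (tg x1 x2 y2))) ∧
    -- (R2) as maps on h:
    (∀ (x1 y1 y2 y3 : g) (u : G), p u = 0 →
      tG u (σ x1) (σ (tg y1 y2 y3)) =
        tG (tG u (σ x1) (σ y1)) (σ y2) (σ y3) -
          tG (tG u (σ x1) (σ y2)) (σ y1) (σ y3) +
          tG (σ y1) (σ y2) (tG u (σ x1) (σ y3))) := by

  -- antisymmetry in first two arguments
  have anti : ∀ a b c : G, tG b a c = - tG a b c := by
    intro a b c
    have h := hskewG (a + b) c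
    simp only [map_add, LinearMap.add_apply, hskewG, zero_add, add_zero] at h
    exact eq_neg_of_add_eq_zero_left h
  -- difference between bracket of sections and section of bracket lies in ker p
  have key : ∀ a b c : g, p (tG (σ a) (σ b) (σ c) - σ (tg a b c)) = 0 := by
    intro a b c
    simp [hp, hσ]
  refine ⟨?_, ?_, ?_, ?_⟩
  · intro x1 x2 u hu
    constructor <;> simp [hp, hσ, hu]
  · intro x1 x2 u hu
    have hj := hjacG (σ x1) (σ x2) u
    have h2 : tG (σ x2) u (σ x1) = - tG u (σ x2) (σ x1) := anti _ _ _
    rw [h2] at hj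
    linear_combination (norm := abel) hj
  · intro x1 x2 y1 y2 u hu
    have hf := hfundG (σ x1) (σ x2) u (σ y1) (σ y2)
    have e1 : tG u (tG (σ x1) (σ x2) (σ y1)) (σ y2) = tG u (σ (tg x1 x2 y1)) (σ y2) := by
      have h0 : tG u (tG (σ x1) (σ x2) (σ y1) - σ (tg x1 x2 y1)) (σ y2) = 0 :=
        habel _ _ _ (Or.inl ⟨hu, key _ _ _⟩)
      simp only [map_sub, LinearMap.sub_apply, sub_eq_zero] at h0
      exact h0
    have e2 : tG u (σ y1) (tG (σ x1) (σ x2) (σ y2)) = tG u (σ y1) (σ (tg x1 x2 y2)) := by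
      have h0 : tG u (σ y1) (tG (σ x1) (σ x2) (σ y2) - σ (tg x1 x2 y2)) = 0 :=
        habel _ _ _ (Or.inr (Or.inl ⟨hu, key _ _ _⟩))
      simp only [map_sub, sub_eq_zero] at h0
      exact h0
    rw [e1, e2] at hf
    linear_combination (norm := abel) hf
  · intro x1 y1 y2 y3 u hu
    have e0 : tG u (σ x1) (σ (tg y1 y2 y3)) = tG u (σ x1) (tG (σ y1) (σ y2) (σ y3)) := by
      have h0 : tG u (σ x1) (σ (tg y1 y2 y3) - tG (σ y1) (σ y2) (σ y3)) = 0 := by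
        refine habel _ _ _ (Or.inr (Or.inl ⟨hu, ?_⟩))
        simp only [map_sub]
        rw [hp]
        simp [hσ]
      simp only [map_sub, sub_eq_zero] at h0
      exact h0
    have hf := hfundG u (σ x1) (σ y1) (σ y2) (σ y3)
    have hmid : tG (σ y1) (tG u (σ x1) (σ y2)) (σ y3)
        = - tG (tG u (σ x1) (σ y2)) (σ y1) (σ y3) := anti _ _ _
    rw [hmid] at hf
    rw [e0, hf]
    abel
end

section
/- Let ĝ and g be Lie triple systems over a field F with char F ≠ 2, 3, let p : ĝ → g be a surjective linear map with p([a,b,c]_ĝ) = [p(a),p(b),p(c)]_g such that h := ker p is abelian ([a,b,c]_ĝ = 0 whenever at least two of a,b,c lie in h), and let σ : g → ĝ be a linear section of p. Define ω(x1,x2,x3) := [σ(x1),σ(x2),σ(x3)]_ĝ − σ([x1,x2,x3]_g), θ(x1,x2)(u) := [u, σ(x1), σ(x2)]_ĝ and D(x1,x2)(u) := [σ(x1), σ(x2), u]_ĝ for u ∈ h. Then ω takes values in h and is a 3-cocycle of g with coefficients in h: ω(x,x,y) = 0, ω(x,y,z) + ω(y,z,x) + ω(z,x,y) = 0, and ω(x1,x2,[y1,y2,y3])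 + D(x1,x2)ω(y1,y2,y3) = ω([x1,x2,y1],y2,y3) + ω(y1,[x1,x2,y2],y3) + ω(y1,y2,[x1,x2,y3]) + θ(y2,y3)ω(x1,x2,y1) − θ(y1,y3)ω(x1,x2,y2) + D(y1,y2)ω(x1,x2,y3) for all xi, yi ∈ g. -/
/- STATEMENT 16: for an abelian extension p : ĝ → g with kernel h and a linear
section σ, the map ω(x1,x2,x3) = [σx1,σx2,σx3] − σ([x1,x2,x3]) takes values in h
and is a 3-cocycle of g with coefficients in h, where θ(x1,x2)u = [u,σx1,σx2]
and D(x1,x2)u = [σx1,σx2,u]. -/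
theorem extension_gives_cocycle {F : Type*} [Field F]
    (hchar2 : (2 : F) ≠ 0) (hchar3 : (3 : F) ≠ 0)
    {G : Type*} [AddCommGroup G] [Module F G]
    {g : Type*} [AddCommGroup g] [Module F g]
    (tG : G →ₗ[F] G →ₗ[F] G →ₗ[F] G)
    (hskewG : ∀ x y : G, tG x x y = 0)
    (hjacG : ∀ x y z : G, tG x y z + tG y z x + tG z x y = 0)
    (hfundG : ∀ x y a b c : G,
      tG x y (tG a b c) = tG (tG x y a) b c + tG a (tG x y b) c + tG a b (tG x y c))
    (tg : g →ₗ[F] g →ₗ[F] g →ₗ[F] g)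
    (hskewg : ∀ x y : g, tg x x y = 0)
    (hjacg : ∀ x y z : g, tg x y z + tg y z x + tg z x y = 0)
    (hfundg : ∀ x y a b c : g,
      tg x y (tg a b c) = tg (tg x y a) b c + tg a (tg x y b) c + tg a b (tg x y c))
    (p : G →ₗ[F] g) (hsurj : Function.Surjective p)
    (hp : ∀ a b c : G, p (tG a b c) = tg (p a) (p b) (p c))
    (habel : ∀ a b c : G,
      ((p a = 0 ∧ p b = 0) ∨ (p a = 0 ∧ p c = 0) ∨ (p b = 0 ∧ p c = 0)) →
        tG a b c = 0)
    (σ : g →ₗ[F] G) (hσ : ∀ x : g, p (σ x) = x)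
    (ω : g → g → g → G)
    (hω : ∀ x1 x2 x3 : g,
      ω x1 x2 x3 = tG (σ x1) (σ x2) (σ x3) - σ (tg x1 x2 x3)) :
    -- ω takes values in h = ker p:
    (∀ x1 x2 x3 : g, p (ω x1 x2 x3) = 0) ∧
    -- ω is a 3-cocycle:
    (∀ x y : g, ω x x y = 0) ∧
    (∀ x y z : g, ω x y z + ω y z x + ω z x y = 0) ∧
    (∀ x1 x2 y1 y2 y3 : g,
      ω x1 x2 (tg y1 y2 y3) + tG (σ x1) (σ x2) (ω y1 y2 y3) =
        ω (tg x1 x2 y1) y2 y3 + ω y1 (tg x1 x2 y2) y3 + ω y1 y2 (tg x1 x2 y3) +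
          tG (ω x1 x2 y1) (σ y2) (σ y3) - tG (ω x1 x2 y2) (σ y1) (σ y3) +
          tG (σ y1) (σ y2) (ω x1 x2 y3)) := by

  have skewG : ∀ x y z : G, tG x y z = - tG y x z := by
    intro x y z
    have h := hskewG (x + y) z
    simp only [map_add, LinearMap.add_apply, hskewG, zero_add, add_zero] at h
    rw [add_comm] at h
    exact eq_neg_of_add_eq_zero_left h
  refine ⟨?_, ?_, ?_, ?_⟩
  · intro x1 x2 x3
    rw [hω, map_sub, hp, hσ, hσ, hσ, hσ, sub_self]
  · intro x y
    rw [hω, hskewG, hskewg, map_zero, sub_zero]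
  · intro x y z
    rw [hω, hω, hω]
    have h1 := hjacG (σ x) (σ y) (σ z)
    have h2 : σ (tg x y z) + σ (tg y z x) + σ (tg z x y) = 0 := by
      rw [← map_add, ← map_add, hjacg, map_zero]
    have h3 : tG (σ x) (σ y) (σ z) - σ (tg x y z) +
        (tG (σ y) (σ z) (σ x) - σ (tg y z x)) +
        (tG (σ z) (σ x) (σ y) - σ (tg z x y)) =
        (tG (σ x) (σ y) (σ z) + tG (σ y) (σ z) (σ x) + tG (σ z) (σ x) (σ y)) -
        (σ (tg x y z) + σ (tg y z x) + σ (tg z x y)) := by abel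
    rw [h3, h1, h2, sub_zero]
  · intro x1 x2 y1 y2 y3
    simp only [hω, map_sub, map_add, LinearMap.sub_apply, LinearMap.add_apply]
    rw [hfundG (σ x1) (σ x2) (σ y1) (σ y2) (σ y3), hfundg x1 x2 y1 y2 y3,
      map_add, map_add,
      skewG (σ (tg x1 x2 y2)) (σ y1) (σ y3),
      show tG (σ y1) (tG (σ x1) (σ x2) (σ y2)) (σ y3)
        = - tG (tG (σ x1) (σ x2) (σ y2)) (σ y1) (σ y3) from
          skewG _ _ _]
    abel
end

section
/- Let g be a Lie triple system over a field F with char F ≠ 2, 3, (V,θ) a representation of g with D(x,y) := θ(y,x) − θ(x,y), and ω : g × g × g → V a 3-cocycle. Then the direct sum g ⊕ V with the trilinear bracket [x1 + u1, x2 + u2, x3 + u3]_ω := [x1,x2,x3] + ω(x1,x2,x3) + D(x1,x2)(u3) − θ(x1,x3)(u2) + θ(x2,x3)(u1) (for xi ∈ g, ui ∈ V) is a Lie triple system. -/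
/- STATEMENT 17: given a representation (V,θ) of a Lie triple system g and a
3-cocycle ω, the direct sum g ⊕ V with bracket
[x1+u1, x2+u2, x3+u3]_ω = [x1,x2,x3] + ω(x1,x2,x3) + D(x1,x2)u3 − θ(x1,x3)u2 + θ(x2,x3)u1
is a Lie triple system. -/
set_option maxHeartbeats 2000000 in
theorem semidirect_sum_is_LTS {F : Type*} [Field F]
    (hchar2 : (2 : F) ≠ 0) (hchar3 : (3 : F) ≠ 0)
    {g : Type*} [AddCommGroup g] [Module F g]
    (t : g →ₗ[F] g →ₗ[F] g →ₗ[F] g)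
    (hskew : ∀ x y : g, t x x y = 0)
    (hjac : ∀ x y z : g, t x y z + t y z x + t z x y = 0)
    (hfund : ∀ x y a b c : g,
      t x y (t a b c) = t (t x y a) b c + t a (t x y b) c + t a b (t x y c))
    {V : Type*} [AddCommGroup V] [Module F V]
    (θ : g →ₗ[F] g →ₗ[F] Module.End F V)
    (hR1 : ∀ x1 x2 y1 y2 : g,
      Dop θ x1 x2 * θ y1 y2 - θ y1 y2 * Dop θ x1 x2 =
        θ (t x1 x2 y1) y2 + θ y1 (t x1 x2 y2))
    (hR2 : ∀ x1 y1 y2 y3 : g,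
      θ x1 (t y1 y2 y3) =
        θ y2 y3 * θ x1 y1 - θ y1 y3 * θ x1 y2 + Dop θ y1 y2 * θ x1 y3)
    (ω : g →ₗ[F] g →ₗ[F] g →ₗ[F] V)
    (hω1 : ∀ x y : g, ω x x y = 0)
    (hω2 : ∀ x y z : g, ω x y z + ω y z x + ω z x y = 0)
    (hω3 : ∀ x1 x2 y1 y2 y3 : g,
      ω x1 x2 (t y1 y2 y3) + Dop θ x1 x2 (ω y1 y2 y3) =
        ω (t x1 x2 y1) y2 y3 + ω y1 (t x1 x2 y2) y3 + ω y1 y2 (t x1 x2 y3) +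
          θ y2 y3 (ω x1 x2 y1) - θ y1 y3 (ω x1 x2 y2) +
          Dop θ y1 y2 (ω x1 x2 y3))
    (B : g × V → g × V → g × V → g × V)
    (hB : ∀ a b c : g × V,
      B a b c =
        (t a.1 b.1 c.1,
         ω a.1 b.1 c.1 + Dop θ a.1 b.1 c.2 - θ a.1 c.1 b.2 + θ b.1 c.1 a.2)) :
    (∀ a b : g × V, B a a b = 0) ∧
    (∀ a b c : g × V, B a b c + B b c a + B c a b = 0) ∧
    (∀ a b x y z : g × V,
      B a b (B x y z) = B (B a b x) y z + B x (B a b y) z + B x y (B a b z)) := by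
  have R1v : ∀ (p q r s : g) (v : V),
      θ q p (θ r s v) - θ p q (θ r s v) - (θ r s (θ q p v) - θ r s (θ p q v)) =
        θ (t p q r) s v + θ r (t p q s) v := by
    intro p q r s v
    have h := LinearMap.congr_fun (hR1 p q r s) v
    simpa [Dop, LinearMap.sub_apply, Module.End.mul_apply, LinearMap.add_apply,
      map_sub] using h
  have R2v : ∀ (p q r s : g) (v : V),
      θ p (t q r s) v =
        θ r s (θ p q v) - θ q s (θ p r v) + (θ r q (θ p s v) - θ q r (θ p s v)) := by
    intro p q r s v
    have h := LinearMap.congr_fun (hR2 p q r s) v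
    simpa [Dop, LinearMap.sub_apply, Module.End.mul_apply, LinearMap.add_apply] using h
  refine ⟨?_, ?_, ?_⟩
  · intro a b
    rw [hB]
    simp only [Dop, LinearMap.sub_apply, hskew, hω1]
    ext <;> simp
  · intro a b c
    simp only [hB, Prod.mk_add_mk, Prod.mk_eq_zero, Prod.mk.injEq]
    constructor
    · exact hjac a.1 b.1 c.1
    · simp only [Dop, LinearMap.sub_apply]
      linear_combination (norm := module) hω2 a.1 b.1 c.1
  · intro a b x y z
    simp only [hB, Prod.mk.injEq, Prod.mk_add_mk]
    constructor
    · exact hfund a.1 b.1 x.1 y.1 z.1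
    · have homega := hω3 a.1 b.1 x.1 y.1 z.1
      simp only [Dop, LinearMap.sub_apply] at homega
      simp only [Dop, LinearMap.sub_apply, map_add, map_sub]
      linear_combination (norm := module) homega
        + R1v a.1 b.1 y.1 x.1 z.2 - R1v a.1 b.1 x.1 y.1 z.2
        - R1v a.1 b.1 x.1 z.1 y.2 + R1v a.1 b.1 y.1 z.1 x.2
        - R2v a.1 x.1 y.1 z.1 b.2 + R2v b.1 x.1 y.1 z.1 a.2
end
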